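/- For 0 < α < 1 and nonnegative reals ω^1,…,ω^n satisfying, for each 1 ≤ j ≤ n, the bound Σ_{k=1}^j a_{j-k}(ω^k - ω^{k-1}) ≤ Γ(2-α)τ^α(λ_1 ω^j + λ_2 ω^{j-1}) + Γ(2-α)τ^α g^j, summation against p_{n-j} yields ω^n - ω^0 ≤ Γ(2-α)τ^α Σ_{j=1}^n p_{n-j}(λ_1 ω^j + λ_2 ω^{j-1}) + (t_n^α/Γ(1+α)) max_{1≤j≤n} g^j. -/

import Mathlib

open Real Finset intervalIntegral MeasureTheory

section Stmt16Aux

variable {α : ℝ}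

lemma s16_icc_sum_eq (n : ℕ) (f : ℕ → ℝ) :
    ∑ j ∈ Finset.Icc 1 n, f j = ∑ i ∈ Finset.range n, f (1 + i) := by
  rw [← Finset.Ico_add_one_right_eq_Icc, Finset.sum_Ico_eq_sum_range]
  simp

lemma s16_telescope (φ : ℕ → ℝ) (n : ℕ) :
    ∑ k ∈ Finset.Icc 1 n, (φ k - φ (k - 1)) = φ n - φ 0 := by
  rw [s16_icc_sum_eq]
  have : ∀ i, φ (1 + i) - φ (1 + i - 1) = φ (i + 1) - φ i := by
    intro i; congr 2 <;> omega
  simp_rw [this]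
  exact Finset.sum_range_sub φ n

lemma s16_a_pos (hα1 : α < 1) (i : ℕ) : 0 < ((i : ℝ) + 1) ^ (1 - α) - (i : ℝ) ^ (1 - α) :=
  sub_pos.2 (Real.rpow_lt_rpow (Nat.cast_nonneg i) (lt_add_one _) (by linarith))

lemma s16_int_rpow_neg (hα1 : α < 1) (x y : ℝ) :
    ∫ s in x..y, s ^ (-α) = (y ^ (1 - α) - x ^ (1 - α)) / (1 - α) := by
  rw [integral_rpow (Or.inl (by linarith))]
  ring_nf

lemma s16_a_integral (hα1 : α < 1) (x : ℝ) :
    (x + 1) ^ (1 - α) - x ^ (1 - α) = (1 - α) * ∫ s in x..(x + 1), s ^ (-α) := by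
  rw [s16_int_rpow_neg hα1]
  have h : (1 - α) ≠ 0 := by linarith
  field_simp

lemma s16_a_anti (hα0 : 0 < α) (hα1 : α < 1) (i : ℕ) :
    ((i : ℝ) + 1 + 1) ^ (1 - α) - ((i : ℝ) + 1) ^ (1 - α)
      ≤ ((i : ℝ) + 1) ^ (1 - α) - (i : ℝ) ^ (1 - α) := by
  rcases Nat.eq_zero_or_pos i with rfl | hi
  · have h2 : (2 : ℝ) ^ (1 - α) ≤ 2 := by
      nth_rewrite 2 [show (2:ℝ) = 2 ^ (1:ℝ) by norm_num]
      exact Real.rpow_le_rpow_of_exponent_le (by norm_num) (by linarith)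
    simp only [Nat.cast_zero, zero_add]
    rw [Real.zero_rpow (by linarith), Real.one_rpow]
    norm_num
    linarith
  · have hi1 : (1 : ℝ) ≤ (i : ℝ) := by exact_mod_cast hi
    rw [show ((i:ℝ)+1+1) = ((i:ℝ)+1)+1 by ring, s16_a_integral hα1, s16_a_integral hα1 (i:ℝ)]
    have hint : ∫ s in ((i:ℝ)+1)..((i:ℝ)+1+1), s ^ (-α) = ∫ s in (i:ℝ)..((i:ℝ)+1), (s+1) ^ (-α) := by
      rw [intervalIntegral.integral_comp_add_right (fun s => s ^ (-α)) 1]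
    rw [hint]
    have hmono : (∫ s in (i:ℝ)..((i:ℝ)+1), (s+1) ^ (-α)) ≤ ∫ s in (i:ℝ)..((i:ℝ)+1), s ^ (-α) := by
      apply intervalIntegral.integral_mono_on (by linarith)
      · have := (intervalIntegrable_rpow' (a := (i:ℝ)+1) (b := (i:ℝ)+1+1)
          (r := -α) (by linarith)).comp_add_right 1
        simpa using this
      · exact intervalIntegrable_rpow' (by linarith)
      · intro x hx
        exact Real.rpow_le_rpow_of_nonpos (by linarith [hx.1]) (by linarith) (by linarith)
    nlinarith [hmono]

variable {a p : ℕ → ℝ}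

lemma s16_hpR (hp : ∀ n : ℕ, 1 ≤ n → p n = ∑ j ∈ Finset.Icc 1 n, (a (j - 1) - a j) * p (n - j))
    (M : ℕ) (hM : 1 ≤ M) :
    p M = ∑ i ∈ Finset.range M, (a i - a (i + 1)) * p (M - 1 - i) := by
  rw [hp M hM, s16_icc_sum_eq]
  refine Finset.sum_congr rfl fun i _ => ?_
  have h1 : 1 + i - 1 = i := by omega
  have h2 : M - (1 + i) = M - 1 - i := by omega
  rw [h1, h2, show a (1 + i) = a (i + 1) by rw [Nat.add_comm]]

lemma s16_p_nonneg (hα0 : 0 < α) (hα1 : α < 1)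
    (ha : ∀ i : ℕ, a i = ((i : ℝ) + 1) ^ (1 - α) - (i : ℝ) ^ (1 - α))
    (hp0 : p 0 = 1)
    (hp : ∀ n : ℕ, 1 ≤ n → p n = ∑ j ∈ Finset.Icc 1 n, (a (j - 1) - a j) * p (n - j)) :
    ∀ m, 0 ≤ p m := by
  intro m
  induction m using Nat.strong_induction_on with
  | _ m ih =>
    rcases Nat.eq_zero_or_pos m with rfl | hm
    · rw [hp0]; norm_num
    · rw [s16_hpR hp m hm]
      refine Finset.sum_nonneg fun i _ => mul_nonneg ?_ (ih _ (by omega))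
      rw [ha i, ha (i + 1)]
      push_cast
      exact sub_nonneg.2 (s16_a_anti hα0 hα1 i)

lemma s16_a_zero (hα1 : α < 1)
    (ha : ∀ i : ℕ, a i = ((i : ℝ) + 1) ^ (1 - α) - (i : ℝ) ^ (1 - α)) : a 0 = 1 := by
  rw [ha 0]
  norm_num
  rw [Real.zero_rpow (ne_of_gt (show (0:ℝ) < 1 - α by linarith))]

lemma s16_conv (hα1 : α < 1)
    (ha : ∀ i : ℕ, a i = ((i : ℝ) + 1) ^ (1 - α) - (i : ℝ) ^ (1 - α))
    (hp0 : p 0 = 1)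
    (hp : ∀ n : ℕ, 1 ≤ n → p n = ∑ j ∈ Finset.Icc 1 n, (a (j - 1) - a j) * p (n - j)) :
    ∀ M : ℕ, ∑ i ∈ Finset.range (M + 1), p (M - i) * a i = 1 := by
  intro M
  induction M using Nat.strong_induction_on with
  | _ M ih =>
    rcases Nat.eq_zero_or_pos M with rfl | hM
    · simp [hp0, s16_a_zero hα1 ha]
    · obtain ⟨N, rfl⟩ : ∃ N, M = N + 1 := ⟨M - 1, by omega⟩
      rw [Finset.sum_range_succ']
      have h1 : ∀ i, N + 1 - (i + 1) = N - i := fun i => by omega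
      simp only [h1, Nat.sub_zero, s16_a_zero hα1 ha, mul_one]
      rw [s16_hpR hp (N + 1) (by omega)]
      have h2 : ∀ i, N + 1 - 1 - i = N - i := fun i => by omega
      simp only [h2]
      rw [← Finset.sum_add_distrib]
      have h3 : ∀ i ∈ Finset.range (N + 1),
          p (N - i) * a (i + 1) + (a i - a (i + 1)) * p (N - i) = p (N - i) * a i := by
        intro i _; ring
      rw [Finset.sum_congr rfl h3]
      exact ih N (by omega)

lemma s16_conv' (hα1 : α < 1)
    (ha : ∀ i : ℕ, a i = ((i : ℝ) + 1) ^ (1 - α) - (i : ℝ) ^ (1 - α))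
    (hp0 : p 0 = 1)
    (hp : ∀ n : ℕ, 1 ≤ n → p n = ∑ j ∈ Finset.Icc 1 n, (a (j - 1) - a j) * p (n - j))
    (k n : ℕ) (hk1 : 1 ≤ k) (hkn : k ≤ n) :
    ∑ j ∈ Finset.Icc k n, p (n - j) * a (j - k) = 1 := by
  rw [← Finset.Ico_add_one_right_eq_Icc, Finset.sum_Ico_eq_sum_range]
  have h1 : n + 1 - k = (n - k) + 1 := by omega
  have h2 : ∀ i, n - (k + i) = n - k - i := fun i => by omega
  have h3 : ∀ i, k + i - k = i := fun i => by omega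
  simp only [h1, h2, h3]
  exact s16_conv hα1 ha hp0 hp (n - k)

lemma s16_swap (hα1 : α < 1)
    (ha : ∀ i : ℕ, a i = ((i : ℝ) + 1) ^ (1 - α) - (i : ℝ) ^ (1 - α))
    (hp0 : p 0 = 1)
    (hp : ∀ n : ℕ, 1 ≤ n → p n = ∑ j ∈ Finset.Icc 1 n, (a (j - 1) - a j) * p (n - j))
    (n : ℕ) (F : ℕ → ℝ) :
    ∑ j ∈ Finset.Icc 1 n, p (n - j) * ∑ k ∈ Finset.Icc 1 j, a (j - k) * F k
      = ∑ k ∈ Finset.Icc 1 n, F k := by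
  have step1 : ∀ j ∈ Finset.Icc 1 n,
      p (n - j) * ∑ k ∈ Finset.Icc 1 j, a (j - k) * F k
        = ∑ k ∈ Finset.Icc 1 n, (if k ≤ j then p (n - j) * (a (j - k) * F k) else 0) := by
    intro j hj
    rw [Finset.mem_Icc] at hj
    rw [Finset.mul_sum, ← Finset.sum_filter]
    congr 1
    ext k
    simp only [Finset.mem_filter, Finset.mem_Icc]
    omega
  rw [Finset.sum_congr rfl step1, Finset.sum_comm]
  refine Finset.sum_congr rfl fun k hk => ?_
  rw [Finset.mem_Icc] at hk
  have step2 : ∑ j ∈ Finset.Icc 1 n, (if k ≤ j then p (n - j) * (a (j - k) * F k) else 0)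
      = ∑ j ∈ Finset.Icc k n, p (n - j) * (a (j - k) * F k) := by
    rw [← Finset.sum_filter]
    congr 1
    ext j
    simp only [Finset.mem_filter, Finset.mem_Icc]
    omega
  rw [step2]
  have : ∑ j ∈ Finset.Icc k n, p (n - j) * (a (j - k) * F k)
      = (∑ j ∈ Finset.Icc k n, p (n - j) * a (j - k)) * F k := by
    rw [Finset.sum_mul]
    exact Finset.sum_congr rfl fun j _ => by ring
  rw [this, s16_conv' hα1 ha hp0 hp k n hk.1 hk.2, one_mul]

lemma s16_beta01_int (hα0 : 0 < α) (hα1 : α < 1) :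
    IntervalIntegrable (fun t : ℝ => t ^ (α - 1) * (1 - t) ^ (-α)) volume 0 1 := by
  have hc : IntervalIntegrable (fun x : ℝ =>
      (x : ℂ) ^ ((α : ℂ) - 1) * (1 - (x : ℂ)) ^ (((1 - α : ℝ) : ℂ) - 1)) volume 0 1 :=
    Complex.betaIntegral_convergent (by simpa using hα0) (by simp; linarith)
  rw [intervalIntegrable_iff] at hc ⊢
  have h2 : MeasureTheory.IntegrableOn
      (fun x : ℝ => ((x : ℂ) ^ ((α : ℂ) - 1) * (1 - (x : ℂ)) ^ (((1 - α : ℝ) : ℂ) - 1)).re)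
      (Set.uIoc 0 1) volume := hc.re
  refine h2.congr_fun ?_ measurableSet_uIoc
  intro x hx
  rw [Set.uIoc_of_le (by norm_num : (0:ℝ) ≤ 1)] at hx
  obtain ⟨hx0, hx1⟩ := hx
  have e1 : (x : ℂ) ^ ((α : ℂ) - 1) * (1 - (x : ℂ)) ^ (((1 - α : ℝ) : ℂ) - 1)
      = ((x ^ (α - 1) * (1 - x) ^ (-α) : ℝ) : ℂ) := by
    rw [Complex.ofReal_mul, Complex.ofReal_cpow hx0.le, Complex.ofReal_cpow (by linarith : (0:ℝ) ≤ 1 - x)]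
    push_cast
    ring_nf
  simp only [e1, Complex.ofReal_re]

lemma s16_beta01_val (hα0 : 0 < α) (hα1 : α < 1) :
    ∫ t in (0:ℝ)..1, t ^ (α - 1) * (1 - t) ^ (-α) = Real.Gamma α * Real.Gamma (1 - α) := by
  have h1 := Complex.Gamma_mul_Gamma_eq_betaIntegral (s := (α : ℂ)) (t := ((1 - α : ℝ) : ℂ))
    (by simpa using hα0) (by simp; linarith)
  have h2 : (α : ℂ) + ((1 - α : ℝ) : ℂ) = 1 := by push_cast; ring
  rw [h2, Complex.Gamma_one, one_mul] at h1
  have h3 : Complex.betaIntegral (α : ℂ) ((1 - α : ℝ) : ℂ)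
      = ((∫ t in (0:ℝ)..1, t ^ (α - 1) * (1 - t) ^ (-α) : ℝ) : ℂ) := by
    rw [Complex.betaIntegral, ← intervalIntegral.integral_ofReal]
    apply intervalIntegral.integral_congr
    intro x hx
    rw [Set.uIcc_of_le (by norm_num : (0:ℝ) ≤ 1)] at hx
    show (x : ℂ) ^ ((α : ℂ) - 1) * (1 - (x : ℂ)) ^ (((1 - α : ℝ) : ℂ) - 1)
        = ((x ^ (α - 1) * (1 - x) ^ (-α) : ℝ) : ℂ)
    rw [Complex.ofReal_mul, Complex.ofReal_cpow hx.1, Complex.ofReal_cpow (by linarith [hx.2] : (0:ℝ) ≤ 1 - x)]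
    push_cast
    ring_nf
  rw [h3, Complex.Gamma_ofReal, Complex.Gamma_ofReal] at h1
  exact_mod_cast h1.symm

lemma s16_betaJ_int (hα0 : 0 < α) (hα1 : α < 1) {J : ℝ} (hJ : 1 ≤ J) :
    IntervalIntegrable (fun s : ℝ => s ^ (α - 1) * (J - s) ^ (-α)) volume 0 J := by
  have hJ0 : (0:ℝ) < J := by linarith
  have h2 := (s16_beta01_int hα0 hα1).comp_mul_right (c := J⁻¹)
  rw [zero_div, one_div, inv_inv] at h2
  rw [intervalIntegrable_iff] at h2 ⊢
  have h3 : MeasureTheory.IntegrableOn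
      (fun x : ℝ => J⁻¹ * ((x * J⁻¹) ^ (α - 1) * (1 - x * J⁻¹) ^ (-α)))
      (Set.uIoc 0 J) volume := h2.const_mul J⁻¹
  refine h3.congr_fun ?_ measurableSet_uIoc
  intro x hx
  rw [Set.uIoc_of_le hJ0.le] at hx
  obtain ⟨hx0, hxJ⟩ := hx
  have e1 : (1 : ℝ) - x * J⁻¹ = (J - x) * J⁻¹ := by field_simp
  have e2 : (x * J⁻¹ : ℝ) ^ (α - 1) = x ^ (α - 1) * (J⁻¹) ^ (α - 1) :=
    Real.mul_rpow hx0.le (by positivity)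
  have e3 : ((J - x) * J⁻¹ : ℝ) ^ (-α) = (J - x) ^ (-α) * (J⁻¹) ^ (-α) :=
    Real.mul_rpow (by linarith) (by positivity)
  have e4 : (J⁻¹ : ℝ) ^ (α - 1) * (J⁻¹) ^ (-α) = J := by
    rw [← Real.rpow_add (by positivity)]
    rw [show α - 1 + -α = -1 by ring, Real.rpow_neg_one, inv_inv]
  calc J⁻¹ * ((x * J⁻¹) ^ (α - 1) * (1 - x * J⁻¹) ^ (-α))
      = J⁻¹ * ((J⁻¹) ^ (α - 1) * (J⁻¹) ^ (-α)) * (x ^ (α - 1) * (J - x) ^ (-α)) := by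
        rw [e1, e2, e3]; ring
    _ = x ^ (α - 1) * (J - x) ^ (-α) := by rw [e4, inv_mul_cancel₀ (ne_of_gt hJ0), one_mul]

lemma s16_betaJ_val (hα0 : 0 < α) (hα1 : α < 1) {J : ℝ} (hJ : 1 ≤ J) :
    ∫ s in (0:ℝ)..J, s ^ (α - 1) * (J - s) ^ (-α) = Real.Gamma α * Real.Gamma (1 - α) := by
  have hJ0 : (0:ℝ) < J := by linarith
  have h := intervalIntegral.integral_comp_mul_left
    (f := fun s : ℝ => s ^ (α - 1) * (J - s) ^ (-α)) (a := 0) (b := 1) (c := J) (ne_of_gt hJ0)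
  have e : ∫ x in (0:ℝ)..1, (J * x) ^ (α - 1) * (J - J * x) ^ (-α)
      = J⁻¹ * (Real.Gamma α * Real.Gamma (1 - α)) := by
    rw [← s16_beta01_val hα0 hα1, ← intervalIntegral.integral_const_mul]
    apply intervalIntegral.integral_congr
    intro x hx
    rw [Set.uIcc_of_le (by norm_num : (0:ℝ) ≤ 1)] at hx
    obtain ⟨hx0, hx1⟩ := hx
    have e1 : J - J * x = J * (1 - x) := by ring
    have e2 : (J * x : ℝ) ^ (α - 1) = J ^ (α - 1) * x ^ (α - 1) := Real.mul_rpow hJ0.le hx0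
    have e3 : (J * (1 - x) : ℝ) ^ (-α) = J ^ (-α) * (1 - x) ^ (-α) :=
      Real.mul_rpow hJ0.le (by linarith)
    have e4 : (J : ℝ) ^ (α - 1) * J ^ (-α) = J⁻¹ := by
      rw [← Real.rpow_add hJ0, show α - 1 + -α = -1 by ring, Real.rpow_neg_one]
    calc (J * x) ^ (α - 1) * (J - J * x) ^ (-α)
        = J ^ (α - 1) * J ^ (-α) * (x ^ (α - 1) * (1 - x) ^ (-α)) := by
          rw [e1, e2, e3]; ring
      _ = J⁻¹ * (x ^ (α - 1) * (1 - x) ^ (-α)) := by rw [e4]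
  rw [e, mul_zero, mul_one] at h
  have := h.symm
  rw [smul_eq_mul] at this
  field_simp at this
  linarith [this]

lemma s16_cheb (hα0 : 0 < α) (hα1 : α < 1) {J u : ℝ} (hu : 0 ≤ u) (huJ : u + 1 ≤ J) (hJ : 1 ≤ J)
    (hA : u = J - 1 ∨ 1 ≤ J - u - 1)
    (hB : 1 ≤ u ∨ (u = 0 ∧ (J = 1 ∨ 2 ≤ J))) :
    α * (1 - α) * ∫ s in u..(u + 1), s ^ (α - 1) * (J - s) ^ (-α)
      ≤ ((J - u) ^ (1 - α) - (J - u - 1) ^ (1 - α)) * ((u + 1) ^ α - u ^ α) := by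
  have h1α : (0:ℝ) < 1 - α := by linarith
  have hJu1 : (0:ℝ) ≤ J - u - 1 := by linarith
  have hJu : (1:ℝ) ≤ J - u := by linarith
  set m : ℝ := ((J - u) ^ (1 - α) - (J - u - 1) ^ (1 - α)) / (1 - α) with hm_def
  -- m as an integral
  have hm_int : ∫ s in u..(u + 1), (J - s) ^ (-α) = m := by
    rw [intervalIntegral.integral_comp_sub_left (fun s => s ^ (-α)) J, s16_int_rpow_neg hα1]
    rw [show J - (u + 1) = J - u - 1 by ring]
  have hm_int2 : ∫ x in (J - u - 1)..(J - u), x ^ (-α) = m := by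
    rw [s16_int_rpow_neg hα1]
  have hm_pos : 0 < m := by
    apply div_pos _ h1α
    exact sub_pos.2 (Real.rpow_lt_rpow hJu1 (by linarith) h1α)
  have hml : (J - u) ^ (-α) ≤ m := by
    rcases hA with h | h
    · have e1 : J - u = 1 := by rw [h]; ring
      have hmval : m = 1 / (1 - α) := by
        rw [hm_def, show J - u - 1 = 0 by rw [h]; ring, e1, Real.one_rpow,
          Real.zero_rpow (ne_of_gt h1α), sub_zero]
      rw [e1, Real.one_rpow, hmval, le_div_iff₀ h1α]
      nlinarith
    · rw [← hm_int2]
      have hconst : ∫ _x in (J - u - 1)..(J - u), ((J - u) ^ (-α) : ℝ) = (J - u) ^ (-α) := by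
        rw [intervalIntegral.integral_const, smul_eq_mul]
        rw [show J - u - (J - u - 1) = 1 by ring, one_mul]
      rw [← hconst]
      apply intervalIntegral.integral_mono_on (by linarith)
        intervalIntegrable_const (intervalIntegrable_rpow' (by linarith))
      intro x hx
      exact Real.rpow_le_rpow_of_nonpos (by linarith [hx.1]) hx.2 (by linarith)
  have hmu : 1 ≤ J - u - 1 → m ≤ (J - u - 1) ^ (-α) := by
    intro h
    rw [← hm_int2]
    have hconst : ∫ _x in (J - u - 1)..(J - u), ((J - u - 1) ^ (-α) : ℝ) = (J - u - 1) ^ (-α) := by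
      rw [intervalIntegral.integral_const, smul_eq_mul]
      rw [show J - u - (J - u - 1) = 1 by ring, one_mul]
    rw [← hconst]
    apply intervalIntegral.integral_mono_on (by linarith)
      (intervalIntegrable_rpow' (by linarith)) intervalIntegrable_const
    intro x hx
    exact Real.rpow_le_rpow_of_nonpos (by linarith) hx.1 (by linarith)
  have hml_strict : u = 0 → (J - u) ^ (-α) < m := by
    intro hu0
    subst hu0
    rcases hB with h | ⟨_, hJcase⟩
    · linarith
    rcases hJcase with h1 | h2
    · subst h1
      have hmval : m = 1 / (1 - α) := by
        rw [hm_def]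
        norm_num [Real.zero_rpow (ne_of_gt h1α), Real.one_rpow]
      rw [show ((1:ℝ) - 0) = 1 by norm_num, Real.one_rpow, hmval, lt_div_iff₀ h1α]
      nlinarith
    · -- 2 ≤ J : strict integral comparison on [J-1, J]
      rw [sub_zero] at *
      rw [← hm_int2]
      have hconst : ∫ _x in (J - 1)..J, (J ^ (-α) : ℝ) = J ^ (-α) := by
        rw [intervalIntegral.integral_const, smul_eq_mul]
        rw [show J - (J - 1) = 1 by ring, one_mul]
      rw [← hconst]
      have hJ1 : (0:ℝ) < J - 1 := by linarith
      apply intervalIntegral.integral_lt_integral_of_continuousOn_of_le_of_exists_lt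
        (by linarith : J - 1 < J) continuousOn_const
      · apply ContinuousOn.rpow_const continuousOn_id
        intro x hx
        exact Or.inl (ne_of_gt (lt_of_lt_of_le hJ1 hx.1))
      · intro x hx
        exact Real.rpow_le_rpow_of_nonpos (by linarith [hx.1]) hx.2 (by linarith)
      · exact ⟨J - 1, ⟨le_refl _, by linarith⟩,
          Real.rpow_lt_rpow_of_neg hJ1 (by linarith) (by linarith)⟩
  set t : ℝ := m ^ (-α⁻¹) with ht_def
  have ht_pos : 0 < t := Real.rpow_pos_of_pos hm_pos _
  set c : ℝ := J - t with hc_def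
  have hfc : (J - c) ^ (-α) = m := by
    rw [hc_def, show J - (J - t) = t by ring, ht_def, ← Real.rpow_mul hm_pos.le,
      show -α⁻¹ * -α = α⁻¹ * α by ring, inv_mul_cancel₀ (ne_of_gt hα0), Real.rpow_one]
  have hcJ : c < J := by rw [hc_def]; linarith
  have hcu : u ≤ c := by
    have hX : (0:ℝ) < (J - u) ^ (-α) := Real.rpow_pos_of_pos (by linarith) _
    have h1 : t ≤ ((J - u) ^ (-α)) ^ (-α⁻¹) :=
      Real.rpow_le_rpow_of_nonpos hX hml (by have := inv_pos.2 hα0; linarith)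
    have h2 : ((J - u) ^ (-α) : ℝ) ^ (-α⁻¹) = J - u := by
      rw [← Real.rpow_mul (by linarith : (0:ℝ) ≤ J - u),
        show -α * -α⁻¹ = α * α⁻¹ by ring, mul_inv_cancel₀ (ne_of_gt hα0), Real.rpow_one]
    rw [hc_def]
    have := h1.trans_eq h2
    linarith
  have hc1 : c ≤ u + 1 := by
    rcases hA with h | h
    · have e0 : J - u - 1 = 0 := by rw [h]; ring
      rw [hc_def]
      linarith
    · have hY : (0:ℝ) < (J - u - 1) ^ (-α) := Real.rpow_pos_of_pos (by linarith) _
      have h1 : ((J - u - 1) ^ (-α) : ℝ) ^ (-α⁻¹) ≤ t :=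
        Real.rpow_le_rpow_of_nonpos hm_pos (hmu h) (by have := inv_pos.2 hα0; linarith)
      have h2 : ((J - u - 1) ^ (-α) : ℝ) ^ (-α⁻¹) = J - u - 1 := by
        rw [← Real.rpow_mul (by linarith : (0:ℝ) ≤ J - u - 1),
          show -α * -α⁻¹ = α * α⁻¹ by ring, mul_inv_cancel₀ (ne_of_gt hα0), Real.rpow_one]
      rw [hc_def]
      rw [h2] at h1
      linarith
  have hc0 : 0 < c := by
    rcases hB with h | ⟨hu0, _⟩
    · linarith
    · have hstr := hml_strict hu0
      subst hu0
      rw [sub_zero] at hstr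
      have hX : (0:ℝ) < J ^ (-α) := Real.rpow_pos_of_pos (by linarith) _
      have h1 : t < (J ^ (-α)) ^ (-α⁻¹) :=
        Real.rpow_lt_rpow_of_neg hX hstr (by have := inv_pos.2 hα0; linarith)
      have h2 : ((J : ℝ) ^ (-α)) ^ (-α⁻¹) = J := by
        rw [← Real.rpow_mul (by linarith : (0:ℝ) ≤ J),
          show -α * -α⁻¹ = α * α⁻¹ by ring, mul_inv_cancel₀ (ne_of_gt hα0), Real.rpow_one]
      rw [h2] at h1
      rw [hc_def]
      linarith
  -- integrabilities on [u, u+1]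
  set gc : ℝ := c ^ (α - 1) with hgc_def
  have hf_int : IntervalIntegrable (fun s => (J - s) ^ (-α)) volume u (u + 1) := by
    have h := (intervalIntegrable_rpow' (a := J - u) (b := J - (u + 1))
      (show (-1:ℝ) < -α by linarith)).comp_sub_left J
    have e1 : J - (J - u) = u := by ring
    have e2 : J - (J - (u + 1)) = u + 1 := by ring
    rwa [e1, e2] at h
  have hg_int : IntervalIntegrable (fun s : ℝ => s ^ (α - 1)) volume u (u + 1) :=
    intervalIntegrable_rpow' (by linarith)
  have hfg_int : IntervalIntegrable (fun s : ℝ => s ^ (α - 1) * (J - s) ^ (-α)) volume u (u + 1) := by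
    apply (s16_betaJ_int hα0 hα1 hJ).mono_set
    rw [Set.uIcc_of_le (by linarith : u ≤ u + 1), Set.uIcc_of_le (by linarith : (0:ℝ) ≤ J)]
    exact Set.Icc_subset_Icc hu huJ
  have hG_int : IntervalIntegrable
      (fun s : ℝ => m * s ^ (α - 1) + gc * (J - s) ^ (-α) - m * gc) volume u (u + 1) :=
    ((hg_int.const_mul m).add (hf_int.const_mul gc)).sub intervalIntegrable_const
  -- pointwise inequality away from {0, J}
  have hpt : ∀ s : ℝ, s ∈ Set.Icc u (u + 1) → s ≠ 0 → s ≠ J →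
      s ^ (α - 1) * (J - s) ^ (-α) ≤ m * s ^ (α - 1) + gc * (J - s) ^ (-α) - m * gc := by
    intro s hs hs0 hsJ
    have hspos : 0 < s := lt_of_le_of_ne (le_trans hu hs.1) (Ne.symm hs0)
    have hsJlt : s < J := lt_of_le_of_ne (le_trans hs.2 huJ) hsJ
    rcases le_total s c with hsc | hcs
    · have hf_le : (J - s) ^ (-α) ≤ m := by
        rw [← hfc]
        exact Real.rpow_le_rpow_of_nonpos (by linarith) (by linarith) (by linarith)
      have hg_ge : gc ≤ s ^ (α - 1) := by
        rw [hgc_def]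
        exact Real.rpow_le_rpow_of_nonpos hspos hsc (by linarith)
      nlinarith [mul_nonneg (sub_nonneg.2 hg_ge) (sub_nonneg.2 hf_le)]
    · have hf_ge : m ≤ (J - s) ^ (-α) := by
        rw [← hfc]
        exact Real.rpow_le_rpow_of_nonpos (by linarith) (by linarith) (by linarith)
      have hg_le : s ^ (α - 1) ≤ gc := by
        rw [hgc_def]
        exact Real.rpow_le_rpow_of_nonpos hc0 hcs (by linarith)
      nlinarith [mul_nonneg (sub_nonneg.2 hg_le) (sub_nonneg.2 hf_ge)]
  have hae : (fun s : ℝ => s ^ (α - 1) * (J - s) ^ (-α))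
      ≤ᵐ[volume.restrict (Set.Icc u (u + 1))]
      (fun s : ℝ => m * s ^ (α - 1) + gc * (J - s) ^ (-α) - m * gc) := by
    have hnull : ∀ᵐ s ∂(volume : Measure ℝ), s ≠ 0 ∧ s ≠ J := by
      rw [MeasureTheory.ae_iff]
      have hz : (volume : Measure ℝ) ({0, J} : Set ℝ) = 0 :=
        ((Set.finite_singleton J).insert 0).measure_zero volume
      refine measure_mono_null ?_ hz
      intro s hs
      simp only [Set.mem_setOf_eq, not_and_or, not_not] at hs
      simp only [Set.mem_insert_iff, Set.mem_singleton_iff]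
      tauto
    have h2 : ∀ᵐ s ∂(volume.restrict (Set.Icc u (u + 1))), (s ≠ 0 ∧ s ≠ J) ∧ s ∈ Set.Icc u (u + 1) :=
      (MeasureTheory.ae_restrict_of_ae hnull).and
        (MeasureTheory.ae_restrict_mem measurableSet_Icc)
    exact h2.mono fun s hs => hpt s hs.2 hs.1.1 hs.1.2
  have hmain : ∫ s in u..(u + 1), s ^ (α - 1) * (J - s) ^ (-α)
      ≤ ∫ s in u..(u + 1), (m * s ^ (α - 1) + gc * (J - s) ^ (-α) - m * gc) :=
    intervalIntegral.integral_mono_ae_restrict (by linarith) hfg_int hG_int hae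
  -- compute the RHS integral
  have hmg : ∫ s in u..(u + 1), (s : ℝ) ^ (α - 1) = ((u + 1) ^ α - u ^ α) / α := by
    rw [integral_rpow (Or.inl (by linarith : (-1:ℝ) < α - 1))]
    norm_num
  have hconst2 : ∫ _s in u..(u + 1), (m * gc : ℝ) = m * gc := by
    rw [intervalIntegral.integral_const, smul_eq_mul]
    rw [show u + 1 - u = 1 by ring, one_mul]
  have hRHS : ∫ s in u..(u + 1), (m * s ^ (α - 1) + gc * (J - s) ^ (-α) - m * gc)
      = m * (((u + 1) ^ α - u ^ α) / α) := by
    rw [intervalIntegral.integral_sub ((hg_int.const_mul m).add (hf_int.const_mul gc))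
      intervalIntegrable_const]
    rw [intervalIntegral.integral_add (hg_int.const_mul m) (hf_int.const_mul gc)]
    rw [intervalIntegral.integral_const_mul, intervalIntegral.integral_const_mul]
    rw [hmg, hm_int, hconst2]
    ring
  rw [hRHS] at hmain
  have hfinal : α * (1 - α) * (m * (((u + 1) ^ α - u ^ α) / α))
      = ((J - u) ^ (1 - α) - (J - u - 1) ^ (1 - α)) * ((u + 1) ^ α - u ^ α) := by
    rw [hm_def]
    field_simp
  calc α * (1 - α) * ∫ s in u..(u + 1), s ^ (α - 1) * (J - s) ^ (-α)
      ≤ α * (1 - α) * (m * (((u + 1) ^ α - u ^ α) / α)) := by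
        apply mul_le_mul_of_nonneg_left hmain (by positivity)
    _ = ((J - u) ^ (1 - α) - (J - u - 1) ^ (1 - α)) * ((u + 1) ^ α - u ^ α) := hfinal


lemma s16_key (hα0 : 0 < α) (hα1 : α < 1)
    (ha : ∀ i : ℕ, a i = ((i : ℝ) + 1) ^ (1 - α) - (i : ℝ) ^ (1 - α))
    (j : ℕ) (hj : 1 ≤ j) :
    Real.Gamma (1 + α) * Real.Gamma (2 - α)
      ≤ ∑ k ∈ Finset.Icc 1 j, a (j - k) * ((k : ℝ) ^ α - ((k - 1 : ℕ) : ℝ) ^ α) := by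
  have h1α : (0:ℝ) < 1 - α := by linarith
  set J : ℝ := (j : ℝ) with hJdef
  have hJ : (1:ℝ) ≤ J := by rw [hJdef]; exact_mod_cast hj
  have hadj : ∑ k ∈ Finset.Icc 1 j, (∫ s in ((k:ℝ) - 1)..(k:ℝ), s ^ (α - 1) * (J - s) ^ (-α))
      = ∫ s in (0:ℝ)..J, s ^ (α - 1) * (J - s) ^ (-α) := by
    rw [s16_icc_sum_eq]
    have hint : ∀ i : ℕ, i < j → IntervalIntegrable (fun s : ℝ => s ^ (α - 1) * (J - s) ^ (-α))
        volume ((i : ℕ) : ℝ) ((i + 1 : ℕ) : ℝ) := by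
      intro i hi
      apply (s16_betaJ_int hα0 hα1 hJ).mono_set
      rw [Set.uIcc_of_le (by push_cast; linarith : ((i:ℕ):ℝ) ≤ ((i + 1:ℕ):ℝ)),
        Set.uIcc_of_le (by linarith : (0:ℝ) ≤ J)]
      apply Set.Icc_subset_Icc (Nat.cast_nonneg _)
      rw [hJdef]
      exact_mod_cast hi
    have h0 := intervalIntegral.sum_integral_adjacent_intervals (μ := volume)
      (a := fun i : ℕ => (i : ℝ)) (n := j) hint
    have h : ∑ k ∈ Finset.range j, ∫ x in ((k:ℕ):ℝ)..((k + 1:ℕ):ℝ), x ^ (α - 1) * (J - x) ^ (-α)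
        = ∫ x in ((0:ℕ):ℝ)..((j:ℕ):ℝ), x ^ (α - 1) * (J - x) ^ (-α) := h0
    rw [Nat.cast_zero] at h
    rw [← hJdef] at h
    rw [← h]
    refine Finset.sum_congr rfl fun i _ => ?_
    have e1 : ((1 + i : ℕ) : ℝ) - 1 = (i : ℝ) := by push_cast; ring
    have e2 : ((1 + i : ℕ) : ℝ) = ((i + 1 : ℕ) : ℝ) := by push_cast; ring
    rw [e1, e2]
  have hterm : ∀ k ∈ Finset.Icc 1 j,
      α * (1 - α) * (∫ s in ((k:ℝ) - 1)..(k:ℝ), s ^ (α - 1) * (J - s) ^ (-α))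
        ≤ a (j - k) * ((k : ℝ) ^ α - ((k - 1 : ℕ) : ℝ) ^ α) := by
    intro k hk
    rw [Finset.mem_Icc] at hk
    obtain ⟨hk1, hkj⟩ := hk
    have hkR : (1:ℝ) ≤ (k:ℝ) := by exact_mod_cast hk1
    have hkjR : (k:ℝ) ≤ J := by rw [hJdef]; exact_mod_cast hkj
    set u : ℝ := (k : ℝ) - 1 with hu_def
    have hu : 0 ≤ u := by rw [hu_def]; linarith
    have huJ : u + 1 ≤ J := by rw [hu_def]; linarith
    have hcast : ((j - k : ℕ) : ℝ) = J - u - 1 := by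
      rw [hu_def, hJdef, Nat.cast_sub hkj]; ring
    have hA : u = J - 1 ∨ 1 ≤ J - u - 1 := by
      rcases eq_or_lt_of_le hkj with h | h
      · left
        rw [hu_def, hJdef, h]
      · right
        have h1 : (1:ℕ) ≤ j - k := by omega
        have h2 : (1:ℝ) ≤ ((j - k : ℕ) : ℝ) := by exact_mod_cast h1
        rw [hcast] at h2
        linarith
    have hB : 1 ≤ u ∨ (u = 0 ∧ (J = 1 ∨ 2 ≤ J)) := by
      rcases Nat.lt_or_ge k 2 with h2 | h2
      · have hk1' : k = 1 := by omega
        right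
        constructor
        · rw [hu_def, hk1']; norm_num
        · rcases Nat.lt_or_ge j 2 with hj2 | hj2
          · left
            have : j = 1 := by omega
            rw [hJdef, this]; norm_num
          · right
            rw [hJdef]
            exact_mod_cast hj2
      · left
        have : (2:ℝ) ≤ (k:ℝ) := by exact_mod_cast h2
        rw [hu_def]; linarith
    have hch := s16_cheb hα0 hα1 hu huJ hJ hA hB
    have heq : a (j - k) * ((k : ℝ) ^ α - ((k - 1 : ℕ) : ℝ) ^ α)
        = ((J - u) ^ (1 - α) - (J - u - 1) ^ (1 - α)) * ((u + 1) ^ α - u ^ α) := by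
      rw [ha (j - k), hcast, show J - u - 1 + 1 = J - u by ring,
        show ((k - 1 : ℕ) : ℝ) = u by rw [hu_def, Nat.cast_sub hk1]; norm_num,
        show (k : ℝ) = u + 1 by rw [hu_def]; ring]
    rw [heq]
    have : u + 1 = (k:ℝ) := by rw [hu_def]; ring
    rw [this] at hch
    convert hch using 3
    rw [this]
  have hGam : Real.Gamma (1 + α) * Real.Gamma (2 - α)
      = α * (1 - α) * (Real.Gamma α * Real.Gamma (1 - α)) := by
    rw [show (1:ℝ) + α = α + 1 by ring, Real.Gamma_add_one (ne_of_gt hα0),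
      show (2:ℝ) - α = (1 - α) + 1 by ring, Real.Gamma_add_one (ne_of_gt h1α)]
    ring
  calc Real.Gamma (1 + α) * Real.Gamma (2 - α)
      = α * (1 - α) * (Real.Gamma α * Real.Gamma (1 - α)) := hGam
    _ = α * (1 - α) * ∫ s in (0:ℝ)..J, s ^ (α - 1) * (J - s) ^ (-α) := by
        rw [s16_betaJ_val hα0 hα1 hJ]
    _ = ∑ k ∈ Finset.Icc 1 j,
          α * (1 - α) * (∫ s in ((k:ℝ) - 1)..(k:ℝ), s ^ (α - 1) * (J - s) ^ (-α)) := by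
        rw [← Finset.mul_sum, hadj]
    _ ≤ _ := Finset.sum_le_sum hterm

lemma s16_psum (hα0 : 0 < α) (hα1 : α < 1)
    (ha : ∀ i : ℕ, a i = ((i : ℝ) + 1) ^ (1 - α) - (i : ℝ) ^ (1 - α))
    (hp0 : p 0 = 1)
    (hp : ∀ n : ℕ, 1 ≤ n → p n = ∑ j ∈ Finset.Icc 1 n, (a (j - 1) - a j) * p (n - j))
    (n : ℕ) (hn : 1 ≤ n) :
    Real.Gamma (2 - α) * ∑ j ∈ Finset.Icc 1 n, p (n - j) ≤ (n:ℝ) ^ α / Real.Gamma (1 + α) := by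
  have hΓ1 : 0 < Real.Gamma (1 + α) := Real.Gamma_pos_of_pos (by linarith)
  have hpn := s16_p_nonneg hα0 hα1 ha hp0 hp
  have htel : ∑ k ∈ Finset.Icc 1 n, ((k:ℝ) ^ α - ((k - 1 : ℕ) : ℝ) ^ α) = (n:ℝ) ^ α := by
    have h := s16_telescope (fun k : ℕ => (k:ℝ) ^ α) n
    rw [h, Nat.cast_zero, Real.zero_rpow (ne_of_gt hα0), sub_zero]
  have h1 : Real.Gamma (1 + α) * Real.Gamma (2 - α) * ∑ j ∈ Finset.Icc 1 n, p (n - j)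
      ≤ (n:ℝ) ^ α := by
    calc Real.Gamma (1 + α) * Real.Gamma (2 - α) * ∑ j ∈ Finset.Icc 1 n, p (n - j)
        = ∑ j ∈ Finset.Icc 1 n, p (n - j) * (Real.Gamma (1 + α) * Real.Gamma (2 - α)) := by
          rw [Finset.mul_sum]
          exact Finset.sum_congr rfl fun j _ => by ring
      _ ≤ ∑ j ∈ Finset.Icc 1 n, p (n - j) *
            (∑ k ∈ Finset.Icc 1 j, a (j - k) * ((k:ℝ) ^ α - ((k - 1 : ℕ) : ℝ) ^ α)) := by
          refine Finset.sum_le_sum fun j hj => ?_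
          rw [Finset.mem_Icc] at hj
          exact mul_le_mul_of_nonneg_left (s16_key hα0 hα1 ha j hj.1) (hpn _)
      _ = ∑ k ∈ Finset.Icc 1 n, ((k:ℝ) ^ α - ((k - 1 : ℕ) : ℝ) ^ α) :=
          s16_swap hα1 ha hp0 hp n _
      _ = (n:ℝ) ^ α := htel
  rw [le_div_iff₀ hΓ1]
  calc Real.Gamma (2 - α) * (∑ j ∈ Finset.Icc 1 n, p (n - j)) * Real.Gamma (1 + α)
      = Real.Gamma (1 + α) * Real.Gamma (2 - α) * ∑ j ∈ Finset.Icc 1 n, p (n - j) := by ring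
    _ ≤ (n:ℝ) ^ α := h1

end Stmt16Aux

theorem stmt_16 (α : ℝ) (hα0 : 0 < α) (hα1 : α < 1)
    (τ : ℝ) (hτ : 0 < τ)
    (a : ℕ → ℝ) (ha : ∀ i : ℕ, a i = ((i : ℝ) + 1) ^ (1 - α) - (i : ℝ) ^ (1 - α))
    (p : ℕ → ℝ) (hp0 : p 0 = 1)
    (hp : ∀ n : ℕ, 1 ≤ n → p n = ∑ j ∈ Finset.Icc 1 n, (a (j - 1) - a j) * p (n - j))
    (lam1 lam2 : ℝ) (hlam1 : 0 ≤ lam1) (hlam2 : 0 ≤ lam2)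
    (ω g : ℕ → ℝ) (hω : ∀ j, 0 ≤ ω j) (hg : ∀ j, 0 ≤ g j)
    (n : ℕ) (hn : 1 ≤ n)
    (hineq : ∀ j : ℕ, 1 ≤ j → j ≤ n →
      ∑ k ∈ Finset.Icc 1 j, a (j - k) * (ω k - ω (k - 1))
        ≤ Real.Gamma (2 - α) * τ ^ α * (lam1 * ω j + lam2 * ω (j - 1)) +
          Real.Gamma (2 - α) * τ ^ α * g j) :
    ω n - ω 0 ≤ Real.Gamma (2 - α) * τ ^ α *
        ∑ j ∈ Finset.Icc 1 n, p (n - j) * (lam1 * ω j + lam2 * ω (j - 1)) +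
      (((n : ℝ) * τ) ^ α / Real.Gamma (1 + α)) *
        ((Finset.Icc 1 n).sup' (Finset.nonempty_Icc.mpr hn) g) := by
  have hΓ2 : 0 < Real.Gamma (2 - α) := Real.Gamma_pos_of_pos (by linarith)
  have hΓ1 : 0 < Real.Gamma (1 + α) := Real.Gamma_pos_of_pos (by linarith)
  have hτα : 0 < τ ^ α := Real.rpow_pos_of_pos hτ α
  have hpn := s16_p_nonneg hα0 hα1 ha hp0 hp
  set G : ℝ := (Finset.Icc 1 n).sup' (Finset.nonempty_Icc.mpr hn) g with hGdef
  have hGmem : ∀ j ∈ Finset.Icc 1 n, g j ≤ G := fun j hj => Finset.le_sup' g hj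
  have hG0 : 0 ≤ G :=
    le_trans (hg n) (Finset.le_sup' g (Finset.mem_Icc.mpr ⟨hn, le_refl n⟩))
  have h1 : ω n - ω 0
      = ∑ j ∈ Finset.Icc 1 n, p (n - j) * ∑ k ∈ Finset.Icc 1 j, a (j - k) * (ω k - ω (k - 1)) := by
    rw [s16_swap hα1 ha hp0 hp n (fun k => ω k - ω (k - 1)), s16_telescope ω n]
  have h2 : ∑ j ∈ Finset.Icc 1 n, p (n - j) * ∑ k ∈ Finset.Icc 1 j, a (j - k) * (ω k - ω (k - 1))
      ≤ ∑ j ∈ Finset.Icc 1 n, p (n - j) *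
          (Real.Gamma (2 - α) * τ ^ α * (lam1 * ω j + lam2 * ω (j - 1)) +
            Real.Gamma (2 - α) * τ ^ α * g j) := by
    refine Finset.sum_le_sum fun j hj => ?_
    rw [Finset.mem_Icc] at hj
    exact mul_le_mul_of_nonneg_left (hineq j hj.1 hj.2) (hpn _)
  have h3 : ∑ j ∈ Finset.Icc 1 n, p (n - j) *
        (Real.Gamma (2 - α) * τ ^ α * (lam1 * ω j + lam2 * ω (j - 1)) +
          Real.Gamma (2 - α) * τ ^ α * g j)
      = Real.Gamma (2 - α) * τ ^ α *
          (∑ j ∈ Finset.Icc 1 n, p (n - j) * (lam1 * ω j + lam2 * ω (j - 1))) +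
        ∑ j ∈ Finset.Icc 1 n, p (n - j) * (Real.Gamma (2 - α) * τ ^ α * g j) := by
    rw [Finset.mul_sum, ← Finset.sum_add_distrib]
    refine Finset.sum_congr rfl fun j _ => by ring
  have h4 : ∑ j ∈ Finset.Icc 1 n, p (n - j) * (Real.Gamma (2 - α) * τ ^ α * g j)
      ≤ τ ^ α * G * (Real.Gamma (2 - α) * ∑ j ∈ Finset.Icc 1 n, p (n - j)) := by
    have : τ ^ α * G * (Real.Gamma (2 - α) * ∑ j ∈ Finset.Icc 1 n, p (n - j))
        = ∑ j ∈ Finset.Icc 1 n, p (n - j) * (Real.Gamma (2 - α) * τ ^ α * G) := by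
      rw [Finset.mul_sum, Finset.mul_sum]
      exact Finset.sum_congr rfl fun j _ => by ring
    rw [this]
    refine Finset.sum_le_sum fun j hj => ?_
    refine mul_le_mul_of_nonneg_left ?_ (hpn _)
    exact mul_le_mul_of_nonneg_left (hGmem j hj) (by positivity)
  have h5 : τ ^ α * G * (Real.Gamma (2 - α) * ∑ j ∈ Finset.Icc 1 n, p (n - j))
      ≤ τ ^ α * G * ((n:ℝ) ^ α / Real.Gamma (1 + α)) :=
    mul_le_mul_of_nonneg_left (s16_psum hα0 hα1 ha hp0 hp n hn) (by positivity)
  have h6 : τ ^ α * G * ((n:ℝ) ^ α / Real.Gamma (1 + α))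
      = (((n : ℝ) * τ) ^ α / Real.Gamma (1 + α)) * G := by
    rw [Real.mul_rpow (Nat.cast_nonneg n) hτ.le]
    ring
  rw [h1]
  calc ∑ j ∈ Finset.Icc 1 n, p (n - j) * ∑ k ∈ Finset.Icc 1 j, a (j - k) * (ω k - ω (k - 1))
      ≤ Real.Gamma (2 - α) * τ ^ α *
          (∑ j ∈ Finset.Icc 1 n, p (n - j) * (lam1 * ω j + lam2 * ω (j - 1))) +
        ∑ j ∈ Finset.Icc 1 n, p (n - j) * (Real.Gamma (2 - α) * τ ^ α * g j) := by
        rw [← h3]; exact h2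
    _ ≤ Real.Gamma (2 - α) * τ ^ α *
          (∑ j ∈ Finset.Icc 1 n, p (n - j) * (lam1 * ω j + lam2 * ω (j - 1))) +
        (((n : ℝ) * τ) ^ α / Real.Gamma (1 + α)) * G := by
        have := le_trans h4 h5
        rw [h6] at this
        linarith
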